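/- Let {E_i}_{i=0}^{M-1} and {F_j}_{j=0}^{N-1} be POVMs on a finite-dimensional Hilbert space H (E_i ⪰ 0, Σ_i E_i = I; similarly for F), with measurement operators A_i = E_i^{1/2}, such that {F_j} is a coarse-graining of {E_i}: for every j there is a set Λ_j with F_j = Σ_{i∈Λ_j} E_i and the Λ_j partition {0,…,M-1}. Then for every density operator ρ, Σ_i Tr[(E_i^{1/2} √ρ E_i^{1/2})^2] ≤ Σ_j Tr[(F_j^{1/2} √ρ F_j^{1/2})^2]. -/

import Mathlib

open scoped ComplexOrder

open Classical in
/-- The positive semidefinite square root of a matrix (zero if not psd). -/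
noncomputable def msqrt {d : ℕ} (ρ : Matrix (Fin d) (Fin d) ℂ) : Matrix (Fin d) (Fin d) ℂ :=
  if h : ρ.PosSemidef then
    (h.1.eigenvectorUnitary : Matrix (Fin d) (Fin d) ℂ) *
      Matrix.diagonal ((↑) ∘ (√·) ∘ h.1.eigenvalues) *
      (star h.1.eigenvectorUnitary : Matrix (Fin d) (Fin d) ℂ)
  else 0

noncomputable def Matrix.PosSemidef.sqrt {d : ℕ} {A : Matrix (Fin d) (Fin d) ℂ}
    (hA : A.PosSemidef) : Matrix (Fin d) (Fin d) ℂ :=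
  (hA.1.eigenvectorUnitary : Matrix (Fin d) (Fin d) ℂ) *
    Matrix.diagonal ((↑) ∘ (√·) ∘ hA.1.eigenvalues) *
    (star hA.1.eigenvectorUnitary : Matrix (Fin d) (Fin d) ℂ)

lemma Matrix.PosSemidef.posSemidef_sqrt {d : ℕ} {A : Matrix (Fin d) (Fin d) ℂ}
    (hA : A.PosSemidef) : hA.sqrt.PosSemidef := by
  have hD : (Matrix.diagonal (((↑) ∘ (√·) ∘ hA.1.eigenvalues) : Fin d → ℂ)).PosSemidef := by
    rw [Matrix.posSemidef_diagonal_iff]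
    intro i
    simp only [Function.comp_apply, Complex.zero_le_real]
    exact Real.sqrt_nonneg _
  have := hD.mul_mul_conjTranspose_same (hA.1.eigenvectorUnitary : Matrix (Fin d) (Fin d) ℂ)
  simpa [Matrix.PosSemidef.sqrt, Matrix.star_eq_conjTranspose] using this

lemma Matrix.PosSemidef.sqrt_mul_self {d : ℕ} {A : Matrix (Fin d) (Fin d) ℂ}
    (hA : A.PosSemidef) : hA.sqrt * hA.sqrt = A := by
  set U : Matrix (Fin d) (Fin d) ℂ := (hA.1.eigenvectorUnitary : Matrix (Fin d) (Fin d) ℂ)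
  have hU : star U * U = 1 := Unitary.coe_star_mul_self hA.1.eigenvectorUnitary
  have hDD : Matrix.diagonal (((↑) ∘ (√·) ∘ hA.1.eigenvalues) : Fin d → ℂ) *
      Matrix.diagonal (((↑) ∘ (√·) ∘ hA.1.eigenvalues) : Fin d → ℂ) =
      Matrix.diagonal (RCLike.ofReal ∘ hA.1.eigenvalues) := by
    rw [Matrix.diagonal_mul_diagonal]
    congr 1
    funext i
    simp only [Function.comp_apply]
    rw [← Complex.ofReal_mul, Real.mul_self_sqrt (hA.eigenvalues_nonneg i)]
    rfl
  have hspec := hA.1.spectral_theorem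
  rw [Unitary.conjStarAlgAut_apply] at hspec
  conv_rhs => rw [hspec]
  simp only [Matrix.PosSemidef.sqrt]
  change U * _ * star U * (U * _ * star U) = _
  rw [show ∀ D D' : Matrix (Fin d) (Fin d) ℂ, U * D * star U * (U * D' * star U)
      = U * D * (star U * U) * D' * star U from fun D D' => by noncomm_ring, hU, mul_one,
    mul_assoc U, hDD]

lemma msqrt_of_psd {d : ℕ} {A : Matrix (Fin d) (Fin d) ℂ} (hA : A.PosSemidef) :
    msqrt A = hA.sqrt := by
  simp [msqrt, hA, Matrix.PosSemidef.sqrt]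

lemma psd_trace_re_nonneg {d : ℕ} {A : Matrix (Fin d) (Fin d) ℂ} (hA : A.PosSemidef) :
    0 ≤ A.trace.re := by
  have h : ∀ i, 0 ≤ (A i i).re := by
    intro i
    have := hA.re_dotProduct_nonneg (Pi.single i 1)
    simpa [dotProduct, Matrix.mulVec, Pi.single_apply, Finset.sum_ite_eq,
      Finset.sum_ite_eq'] using this
  simp only [Matrix.trace, Matrix.diag, Complex.re_sum]
  exact Finset.sum_nonneg fun i _ => h i

/-- Tr(PQ).re ≥ 0 for psd P, Q. -/
lemma trace_mul_psd_re_nonneg {d : ℕ} {P Q : Matrix (Fin d) (Fin d) ℂ}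
    (hP : P.PosSemidef) (hQ : Q.PosSemidef) : 0 ≤ (P * Q).trace.re := by
  have hs : hP.sqrt * hP.sqrt = P := hP.sqrt_mul_self
  have hherm : hP.sqrt.conjTranspose = hP.sqrt := hP.posSemidef_sqrt.1
  have hpsd : (hP.sqrt * Q * hP.sqrt).PosSemidef := by
    have := hQ.mul_mul_conjTranspose_same hP.sqrt
    rwa [hherm] at this
  have heq : (hP.sqrt * Q * hP.sqrt).trace = (P * Q).trace := by
    rw [mul_assoc, Matrix.trace_mul_comm, mul_assoc, hs, Matrix.trace_mul_comm]
  rw [← heq]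
  exact psd_trace_re_nonneg hpsd

/-- Cross term nonnegativity: Tr(A X B X).re ≥ 0 for psd A, B, X. -/
lemma cross_trace_re_nonneg {d : ℕ} {A B X : Matrix (Fin d) (Fin d) ℂ}
    (hA : A.PosSemidef) (hB : B.PosSemidef) (hX : X.PosSemidef) :
    0 ≤ (A * X * B * X).trace.re := by
  set Y := hX.sqrt with hY
  have hs : Y * Y = X := hX.sqrt_mul_self
  have hherm : Y.conjTranspose = Y := hX.posSemidef_sqrt.1
  have hPA : (Y * A * Y).PosSemidef := by
    have := hA.mul_mul_conjTranspose_same Y; rwa [hherm] at this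
  have hPB : (Y * B * Y).PosSemidef := by
    have := hB.mul_mul_conjTranspose_same Y; rwa [hherm] at this
  have htr : (A * X * B * X).trace = ((Y * A * Y) * (Y * B * Y)).trace := by
    rw [← hs,
      show A * (Y * Y) * B * (Y * Y) = (A * (Y * Y) * B * Y) * Y by noncomm_ring,
      Matrix.trace_mul_comm,
      show Y * (A * (Y * Y) * B * Y) = (Y * A * Y) * (Y * B * Y) by noncomm_ring]
  rw [htr]
  exact trace_mul_psd_re_nonneg hPA hPB

/-- Tr[(√A X √A)²] = Tr(A X A X) for psd A. -/
lemma sqrt_conj_sq_trace {d : ℕ} {A X : Matrix (Fin d) (Fin d) ℂ} (hA : A.PosSemidef) :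
    ((msqrt A * X * msqrt A) ^ 2).trace = (A * X * A * X).trace := by
  rw [msqrt_of_psd hA]
  set S := hA.sqrt with hS
  have hs : S * S = A := hA.sqrt_mul_self
  rw [sq, show (S * X * S) * (S * X * S) = (S * X * (S * S) * X) * S by noncomm_ring,
    Matrix.trace_mul_comm,
    show S * (S * X * (S * S) * X) = (S * S) * X * ((S * S) * X) by noncomm_ring, hs,
    ← mul_assoc]

theorem povm_coherence_coarse_graining {d M N : ℕ}
    (E : Fin M → Matrix (Fin d) (Fin d) ℂ) (F : Fin N → Matrix (Fin d) (Fin d) ℂ)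
    (hE : ∀ i, (E i).PosSemidef) (hEs : ∑ i, E i = 1)
    (hF : ∀ j, (F j).PosSemidef) (hFs : ∑ j, F j = 1)
    (Λ : Fin N → Finset (Fin M))
    (hdisj : ∀ j j', j ≠ j' → Disjoint (Λ j) (Λ j'))
    (hcover : Finset.univ.biUnion Λ = Finset.univ)
    (hcoarse : ∀ j, F j = ∑ i ∈ Λ j, E i)
    (ρ : Matrix (Fin d) (Fin d) ℂ) (hρ : ρ.PosSemidef) (hρtr : ρ.trace = 1) :
    ∑ i, ((msqrt (E i) * msqrt ρ * msqrt (E i)) ^ 2).trace.re ≤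
      ∑ j, ((msqrt (F j) * msqrt ρ * msqrt (F j)) ^ 2).trace.re := by
  set X := msqrt ρ with hXdef
  have hXpsd : X.PosSemidef := by rw [hXdef, msqrt_of_psd hρ]; exact hρ.posSemidef_sqrt
  -- the cross-term function
  set t : Fin M → Fin M → ℝ := fun i i' => (E i * X * E i' * X).trace.re with ht
  have htnonneg : ∀ i i', 0 ≤ t i i' := fun i i' =>
    cross_trace_re_nonneg (hE i) (hE i') hXpsd
  -- rewrite LHS
  have hL : ∀ i, ((msqrt (E i) * X * msqrt (E i)) ^ 2).trace.re = t i i := fun i => by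
    rw [sqrt_conj_sq_trace (hE i)]
  -- rewrite RHS
  have hR : ∀ j, ((msqrt (F j) * X * msqrt (F j)) ^ 2).trace.re
      = ∑ i ∈ Λ j, ∑ i' ∈ Λ j, t i i' := by
    intro j
    rw [sqrt_conj_sq_trace (hF j), hcoarse j]
    rw [show (∑ i ∈ Λ j, E i) * X * (∑ i ∈ Λ j, E i) * X
        = ∑ i ∈ Λ j, ∑ i' ∈ Λ j, E i * X * E i' * X by
      simp only [Finset.sum_mul, Finset.mul_sum]
      exact Finset.sum_comm]
    simp [Matrix.trace_sum, Complex.re_sum, ht]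
  simp only [hL, hR]
  -- split LHS along the partition
  have hsplit : ∑ i, t i i = ∑ j, ∑ i ∈ Λ j, t i i := by
    rw [← hcover, Finset.sum_biUnion]
    intro j _ j' _ hjj'
    exact hdisj j j' hjj'
  rw [hsplit]
  refine Finset.sum_le_sum fun j _ => Finset.sum_le_sum fun i hi => ?_
  exact Finset.single_le_sum (fun i' _ => htnonneg i i') hi
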